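/- Under the same setting with F additionally μ-strongly convex and 0 < τ ≤ 1/L, the inexact proximal gradient step x⁺ = prox_{τR}(x − τ(∇F(x) + e)) satisfies ‖x⁺ − x*‖² ≤ (1 − μτ)‖x − x*‖² + 2τ‖e‖·‖x⁺ − x*‖, where x* is the minimizer of F + R. -/

import Mathlib

open RealInnerProductSpace

variable {n : ℕ}

local notation "E" => EuclideanSpace ℝ (Fin n)

lemma convex_grad_ineq {g : EuclideanSpace ℝ (Fin n) → ℝ}
    (hg : ConvexOn ℝ Set.univ g) {g' x : EuclideanSpace ℝ (Fin n)}
    (hd : HasGradientAt g g' x) (y : EuclideanSpace ℝ (Fin n)) :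
    g x + ⟪g', y - x⟫ ≤ g y := by
  set d := y - x with hdd
  have hline : HasDerivAt (fun t : ℝ => g (x + t • d)) (⟪g', d⟫) 0 := by
    have h1 : HasDerivAt (fun t : ℝ => x + t • d) d 0 := by
      simpa using ((hasDerivAt_id (0:ℝ)).smul_const d).const_add x
    have hx0 : x + (0:ℝ) • d = x := by simp
    have h2 := HasFDerivAt.comp_hasDerivAt 0
      (hx0 ▸ hasGradientAt_iff_hasFDerivAt.mp hd) h1
    simpa [InnerProductSpace.toDual_apply_apply, Function.comp_def] using h2
  have hslope := hasDerivAt_iff_tendsto_slope.mp hline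
  have hslope' : Filter.Tendsto (slope (fun t : ℝ => g (x + t • d)) 0) (nhdsWithin 0 (Set.Ioi 0))
      (nhds ⟪g', d⟫) := hslope.mono_left (nhdsWithin_mono 0 (by intro t ht; exact ne_of_gt ht))
  have hev : ∀ᶠ t in nhdsWithin (0:ℝ) (Set.Ioi 0),
      slope (fun t : ℝ => g (x + t • d)) 0 t ≤ g y - g x := by
    filter_upwards [Ioc_mem_nhdsGT_of_mem (Set.mem_Ico.mpr ⟨le_refl (0:ℝ), one_pos⟩)]
      with t ht
    obtain ⟨ht0, ht1⟩ := ht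
    have hconv := hg.2 (Set.mem_univ x) (Set.mem_univ y)
      (show (0:ℝ) ≤ 1 - t by linarith) ht0.le (by ring)
    have hpt : (1 - t) • x + t • y = x + t • d := by
      rw [hdd]; module
    rw [hpt] at hconv
    have : g (x + t • d) - g x ≤ t * (g y - g x) := by
      simp only [smul_eq_mul] at hconv; nlinarith
    rw [slope_def_field]
    simp only [sub_zero, smul_eq_mul, zero_smul, add_zero] at *
    rw [div_le_iff₀ ht0]
    nlinarith
  have := le_of_tendsto hslope' hev
  linarith

lemma descent_lemma {Fq : EuclideanSpace ℝ (Fin n) → ℝ}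
    {F' : EuclideanSpace ℝ (Fin n) → EuclideanSpace ℝ (Fin n)}
    (hgrad : ∀ x, HasGradientAt Fq (F' x) x)
    {L : ℝ} (hL : 0 < L) (hLip : ∀ x y, ‖F' x - F' y‖ ≤ L * ‖x - y‖)
    (x y : EuclideanSpace ℝ (Fin n)) :
    Fq y ≤ Fq x + ⟪F' x, y - x⟫ + L / 2 * ‖y - x‖ ^ 2 := by
  set d := y - x with hdd
  have hφ : ∀ t : ℝ, HasDerivAt (fun s : ℝ => Fq (x + s • d)) ⟪F' (x + t • d), d⟫ t := by
    intro t
    have h1 : HasDerivAt (fun s : ℝ => x + s • d) d t := by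
      simpa using ((hasDerivAt_id t).smul_const d).const_add x
    have h2 := HasFDerivAt.comp_hasDerivAt t
      (hasGradientAt_iff_hasFDerivAt.mp (hgrad (x + t • d))) h1
    simpa [InnerProductSpace.toDual_apply_apply, Function.comp_def] using h2
  set g : ℝ → ℝ := fun t => Fq (x + t • d) - t * ⟪F' x, d⟫ - L / 2 * t ^ 2 * ‖d‖ ^ 2 with hgdef
  have hg : ∀ t : ℝ, HasDerivAt g (⟪F' (x + t • d), d⟫ - ⟪F' x, d⟫ - L * t * ‖d‖ ^ 2) t := by
    intro t
    have h2 : HasDerivAt (fun s : ℝ => s * ⟪F' x, d⟫) ⟪F' x, d⟫ t := by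
      simpa using (hasDerivAt_id t).mul_const ⟪F' x, d⟫
    have h3 : HasDerivAt (fun s : ℝ => L / 2 * s ^ 2 * ‖d‖ ^ 2) (L * t * ‖d‖ ^ 2) t := by
      have := ((hasDerivAt_pow 2 t).const_mul (L / 2)).mul_const (‖d‖ ^ 2)
      refine this.congr_deriv ?_; ring
    exact ((hφ t).sub h2).sub h3
  have hanti : AntitoneOn g (Set.Icc 0 1) := by
    apply antitoneOn_of_deriv_nonpos (convex_Icc 0 1)
    · exact (Differentiable.continuous fun t => (hg t).differentiableAt).continuousOn
    · intro t _
      exact ((hg t).differentiableAt).differentiableWithinAt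
    · intro t ht
      rw [interior_Icc] at ht
      rw [(hg t).deriv]
      have hb1 : ⟪F' (x + t • d) - F' x, d⟫ ≤ ‖F' (x + t • d) - F' x‖ * ‖d‖ :=
        real_inner_le_norm _ _
      have hb2 : ‖F' (x + t • d) - F' x‖ ≤ L * ‖t • d‖ := by
        simpa using hLip (x + t • d) x
      have hb3 : ‖t • d‖ = t * ‖d‖ := by
        rw [norm_smul, Real.norm_eq_abs, abs_of_pos ht.1]
      have hinner : ⟪F' (x + t • d) - F' x, d⟫ = ⟪F' (x + t • d), d⟫ - ⟪F' x, d⟫ :=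
        inner_sub_left _ _ _
      rw [hb3] at hb2
      nlinarith [norm_nonneg d, norm_nonneg (F' (x + t • d) - F' x), ht.1.le]
  have h01 := hanti (Set.mem_Icc.mpr ⟨le_refl (0:ℝ), zero_le_one⟩)
    (Set.mem_Icc.mpr ⟨zero_le_one, le_refl (1:ℝ)⟩) zero_le_one
  have hx0 : x + (0:ℝ) • d = x := by simp
  have hx1 : x + (1:ℝ) • d = y := by rw [hdd]; module
  simp only [hgdef, hx0, hx1] at h01
  nlinarith [h01]

lemma strong_convex_grad_ineq {Fq : EuclideanSpace ℝ (Fin n) → ℝ} {μ : ℝ}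
    (hFsc : StrongConvexOn Set.univ μ Fq) {g' x : EuclideanSpace ℝ (Fin n)}
    (hgrad : HasGradientAt Fq g' x) (y : EuclideanSpace ℝ (Fin n)) :
    Fq x + ⟪g', y - x⟫ + μ / 2 * ‖y - x‖ ^ 2 ≤ Fq y := by
  have hG : ConvexOn ℝ Set.univ (fun z => Fq z - μ / 2 * ‖z‖ ^ 2) :=
    strongConvexOn_iff_convex.mp hFsc
  have hGgrad : HasGradientAt (fun z => Fq z - μ / 2 * ‖z‖ ^ 2) (g' - μ • x) x := by
    rw [hasGradientAt_iff_hasFDerivAt]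
    have h1 := hasGradientAt_iff_hasFDerivAt.mp hgrad
    have h2 := (hasFDerivAt_id (𝕜 := ℝ) x).inner ℝ (hasFDerivAt_id x)
    have h3 := h1.sub (h2.const_mul (μ / 2))
    have hfun : (fun z : EuclideanSpace ℝ (Fin n) => Fq z - μ / 2 * ‖z‖ ^ 2)
        = fun z : EuclideanSpace ℝ (Fin n) => Fq z - μ / 2 * ⟪z, z⟫ := by
      funext z; rw [real_inner_self_eq_norm_sq]
    rw [hfun]
    refine h3.congr_fderiv ?_
    ext w
    simp only [InnerProductSpace.toDual_apply_apply, ContinuousLinearMap.coe_sub', Pi.sub_apply,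
      ContinuousLinearMap.coe_smul', Pi.smul_apply, ContinuousLinearMap.coe_comp',
      Function.comp_apply, ContinuousLinearMap.prod_apply, ContinuousLinearMap.coe_id', id_eq,
      fderivInnerCLM_apply, inner_sub_left, real_inner_smul_left, smul_eq_mul]
    rw [real_inner_comm w x]
    ring
  have key := convex_grad_ineq hG hGgrad y
  simp only [inner_sub_left, real_inner_smul_left] at key
  have e1 : ‖y - x‖ ^ 2 = ‖y‖ ^ 2 - 2 * ⟪y, x⟫ + ‖x‖ ^ 2 := norm_sub_sq_real y x
  have e2 : ⟪x, y - x⟫ = ⟪x, y⟫ - ‖x‖ ^ 2 := by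
    rw [inner_sub_right, real_inner_self_eq_norm_sq]
  have e3 : ⟪x, y⟫ = ⟪y, x⟫ := real_inner_comm y x
  rw [e2, e3] at key
  rw [e1]
  linarith



set_option maxHeartbeats 1000000 in
/-- With `F` additionally `μ`-strongly convex and `0 < τ ≤ 1/L`, the inexact proximal
gradient step `x⁺ = prox_{τR}(x − τ(∇F(x) + e))` satisfies
`‖x⁺ − x*‖² ≤ (1 − μτ)‖x − x*‖² + 2τ‖e‖·‖x⁺ − x*‖` where `x*` minimizes `F + R`. -/
theorem inexact_prox_grad_strongly_convex_bound {n : ℕ}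
    (F R : EuclideanSpace ℝ (Fin n) → ℝ) (F' : EuclideanSpace ℝ (Fin n) → EuclideanSpace ℝ (Fin n))
    (μ : ℝ) (hμ : 0 < μ) (hFsc : StrongConvexOn Set.univ μ F)
    (hRconv : ConvexOn ℝ Set.univ R)
    (hgrad : ∀ x, HasGradientAt F (F' x) x)
    (L : ℝ) (hL : 0 < L) (hLip : ∀ x y, ‖F' x - F' y‖ ≤ L * ‖x - y‖)
    (xs : EuclideanSpace ℝ (Fin n)) (hmin : ∀ y, F xs + R xs ≤ F y + R y)
    (τ : ℝ) (hτ0 : 0 < τ) (hτL : τ ≤ 1 / L)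
    (x e xplus : EuclideanSpace ℝ (Fin n))
    (hprox : ∀ u, R xplus + (1 / (2 * τ)) * ‖xplus - (x - τ • (F' x + e))‖ ^ 2 ≤
      R u + (1 / (2 * τ)) * ‖u - (x - τ • (F' x + e))‖ ^ 2) :
    ‖xplus - xs‖ ^ 2 ≤ (1 - μ * τ) * ‖x - xs‖ ^ 2 + 2 * τ * ‖e‖ * ‖xplus - xs‖ := by
  set v := x - τ • (F' x + e) with hv
  have hVI : ∀ u, τ * (R xplus - R u) ≤ ⟪xplus - v, u - xplus⟫ := by
    intro u
    set IP := ⟪xplus - v, u - xplus⟫ with hIP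
    set M := ‖u - xplus‖ ^ 2 with hM
    have key : ∀ t : ℝ, 0 < t → t ≤ 1 → 0 ≤ 2 * τ * (R u - R xplus) + 2 * IP + t * M := by
      intro t ht0 ht1
      have hp := hprox (xplus + t • (u - xplus))
      have hconv := hRconv.2 (Set.mem_univ xplus) (Set.mem_univ u)
        (show (0:ℝ) ≤ 1 - t by linarith) ht0.le (by ring)
      have hpt : (1 - t) • xplus + t • u = xplus + t • (u - xplus) := by module
      rw [hpt] at hconv
      have hexp : ‖xplus + t • (u - xplus) - v‖ ^ 2
          = ‖xplus - v‖ ^ 2 + 2 * (t * IP) + t ^ 2 * M := by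
        have habel : xplus + t • (u - xplus) - v = (xplus - v) + t • (u - xplus) := by module
        rw [habel, norm_add_sq_real, inner_smul_right, norm_smul, Real.norm_eq_abs,
          abs_of_pos ht0, mul_pow, hIP, hM, real_inner_comm]
      rw [hexp] at hp
      simp only [smul_eq_mul] at hconv
      have h0 : 0 ≤ t * (R u - R xplus) + 1 / (2 * τ) * (2 * (t * IP) + t ^ 2 * M) := by
        have hc : 0 < 1 / (2 * τ) := by positivity
        nlinarith [hp, hconv]
      have hpos : (0:ℝ) ≤ 2 * τ / t := by positivity
      have hmul := mul_le_mul_of_nonneg_left h0 hpos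
      have heq : 2 * τ / t * (t * (R u - R xplus) + 1 / (2 * τ) * (2 * (t * IP) + t ^ 2 * M))
          = 2 * τ * (R u - R xplus) + 2 * IP + t * M := by
        field_simp
        ring
      rw [mul_zero, heq] at hmul
      exact hmul
    by_contra hA
    push_neg at hA
    have hMpos : 0 ≤ M := by positivity
    set A : ℝ := 2 * τ * (R u - R xplus) + 2 * IP with hAdef
    have hAneg : A < 0 := by rw [hAdef]; linarith
    have hden : (0:ℝ) < 2 * (M + 1) := by linarith
    set t0 := min 1 (-A / (2 * (M + 1))) with ht0def
    have h1 : 0 < t0 := lt_min one_pos (div_pos (by linarith) hden)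
    have h2 := key t0 h1 (min_le_left _ _)
    have h3 : t0 ≤ -A / (2 * (M + 1)) := min_le_right _ _
    have h4 : t0 * M ≤ -A / (2 * (M + 1)) * M := mul_le_mul_of_nonneg_right h3 hMpos
    have h5 : -A / (2 * (M + 1)) * M ≤ -A / 2 := by
      rw [div_mul_eq_mul_div, div_le_div_iff₀ hden two_pos]
      nlinarith
    linarith
  have hVIxs := hVI xs
  have hsc := strong_convex_grad_ineq hFsc (hgrad x) xs
  have hdesc := descent_lemma hgrad hL hLip x xplus
  have hmin' := hmin xplus
  have hτL' : τ * L ≤ 1 := by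
    rw [le_div_iff₀ hL] at hτL; linarith
  have hxv : xplus - v = (xplus - x) + τ • (F' x + e) := by rw [hv]; module
  have hinner1 : ⟪xplus - v, xs - xplus⟫
      = ⟪xplus - x, xs - xplus⟫ + τ * ⟪F' x, xs - xplus⟫ + τ * ⟪e, xs - xplus⟫ := by
    rw [hxv, inner_add_left, real_inner_smul_left, inner_add_left]
    ring
  have hsplit : ⟪F' x, xs - xplus⟫ = ⟪F' x, xs - x⟫ - ⟪F' x, xplus - x⟫ := by
    rw [← inner_sub_right]
    congr 1
    module
  have h3pt : ‖xs - x‖ ^ 2 = ‖xplus - x‖ ^ 2 + 2 * ⟪xplus - x, xs - xplus⟫ + ‖xs - xplus‖ ^ 2 := by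
    have habel : xs - x = (xplus - x) + (xs - xplus) := by module
    rw [habel, norm_add_sq_real]
  have hn1 : ‖x - xs‖ = ‖xs - x‖ := norm_sub_rev _ _
  have hn2 : ‖xplus - xs‖ = ‖xs - xplus‖ := norm_sub_rev _ _
  have he : ⟪e, xs - xplus⟫ ≤ ‖e‖ * ‖xs - xplus‖ := real_inner_le_norm _ _
  rw [hinner1, hsplit] at hVIxs
  rw [hn1, hn2]
  have H1 := mul_le_mul_of_nonneg_left hsc hτ0.le
  have H2 := mul_le_mul_of_nonneg_left hdesc hτ0.le
  have H3 := mul_le_mul_of_nonneg_left hmin' hτ0.le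
  have H4 := mul_le_mul_of_nonneg_left he hτ0.le
  have H5 : 0 ≤ (1 - τ * L) * ‖xplus - x‖ ^ 2 := mul_nonneg (by linarith) (sq_nonneg _)
  linarith [hVIxs, h3pt, H1, H2, H3, H4, H5]
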